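/- The group Γ = ⟨a, b, c | a² = b³ = c⁷ = abc⟩ is perfect: its abelianization is trivial. -/

import Mathlib

def brieskornRels : Set (FreeGroup (Fin 3)) :=
  { FreeGroup.of 0 ^ 2 * (FreeGroup.of 0 * FreeGroup.of 1 * FreeGroup.of 2)⁻¹,
    FreeGroup.of 1 ^ 3 * (FreeGroup.of 0 * FreeGroup.of 1 * FreeGroup.of 2)⁻¹,
    FreeGroup.of 2 ^ 7 * (FreeGroup.of 0 * FreeGroup.of 1 * FreeGroup.of 2)⁻¹ }

abbrev BrieskornGroup := PresentedGroup brieskornRels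

/-- `Γ = ⟨a,b,c | a² = b³ = c⁷ = abc⟩` is perfect: its abelianization is trivial. -/
theorem brieskornGroup_perfect : Subsingleton (Abelianization BrieskornGroup) := by
  set A := Abelianization BrieskornGroup
  set π : FreeGroup (Fin 3) →* BrieskornGroup :=
    QuotientGroup.mk' (Subgroup.normalClosure brieskornRels)
  set g : FreeGroup (Fin 3) →* A := (Abelianization.of).comp π with hg
  have hrel : ∀ r ∈ brieskornRels, g r = 1 := by
    intro r hr
    have : π r = 1 :=
      (QuotientGroup.eq_one_iff r).mpr (Subgroup.subset_normalClosure hr)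
    simp [hg, MonoidHom.comp_apply, this]
  set X := g (FreeGroup.of 0)
  set Y := g (FreeGroup.of 1)
  set Z := g (FreeGroup.of 2)
  have h1 : X ^ 2 * (X * Y * Z)⁻¹ = 1 := by
    have := hrel _ (Set.mem_insert _ _)
    simpa using this
  have h2 : Y ^ 3 * (X * Y * Z)⁻¹ = 1 := by
    have := hrel _ (Set.mem_insert_of_mem _ (Set.mem_insert _ _))
    simpa only [map_mul, map_inv, map_pow] using this
  have h3 : Z ^ 7 * (X * Y * Z)⁻¹ = 1 := by
    have := hrel _ (Set.mem_insert_of_mem _ (Set.mem_insert_of_mem _ rfl))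
    simpa only [map_mul, map_inv, map_pow] using this
  have e1 : X ^ 2 = X * Y * Z := by
    rw [mul_inv_eq_one] at h1; exact h1
  have e2 : Y ^ 3 = X * Y * Z := by
    rw [mul_inv_eq_one] at h2; exact h2
  have e3 : Z ^ 7 = X * Y * Z := by
    rw [mul_inv_eq_one] at h3; exact h3
  have hX : X = Y * Z := by
    apply mul_left_cancel (a := X)
    rw [← pow_two, e1, mul_assoc]
  have hY : Y = Z * Z := by
    apply mul_left_cancel (a := Y)
    apply mul_left_cancel (a := Y)
    have hl : Y * (Y * Y) = Y ^ 3 := by simp [pow_succ, pow_two, mul_assoc]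
    rw [hl, e2, hX]
    simp [mul_comm, mul_left_comm, mul_assoc]
  have hZ : Z = 1 := by
    apply mul_left_cancel (a := Z ^ 6)
    rw [mul_one, ← pow_succ, e3, hX, hY]
    simp [pow_succ, pow_one, mul_assoc]
  have hY1 : Y = 1 := by rw [hY, hZ, mul_one]
  have hX1 : X = 1 := by rw [hX, hY1, hZ, mul_one]
  have hgen : ∀ i : Fin 3, g (FreeGroup.of i) = 1 := by
    intro i
    fin_cases i
    · exact hX1
    · exact hY1
    · exact hZ
  have hg1 : g = 1 := by
    apply FreeGroup.ext_hom
    intro a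
    simp [hgen a]
  constructor
  intro x y
  have key : ∀ x : A, x = 1 := by
    intro x
    obtain ⟨b, rfl⟩ := QuotientGroup.mk_surjective x
    obtain ⟨w, rfl⟩ := QuotientGroup.mk'_surjective (Subgroup.normalClosure brieskornRels) b
    show g w = 1
    rw [hg1]
    rfl
  rw [key x, key y]
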